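/- Let m ≥ 7 be odd, α nonzero in the algebraic closure of F_2. Two distinct elements x_i, x_j satisfy x_i^{m-1} = (x_i+α)^{m-1}, x_j^{m-1} = (x_j+α)^{m-1}, and x_i^m + (x_i+α)^m = x_j^m + (x_j+α)^m if and only if x_i = ζ₁(1+ζ₂)/(ζ₁+ζ₂) · α and x_j = (1+ζ₂)/(ζ₁+ζ₂) · α for two distinct elements ζ₁, ζ₂ ≠ 1 in the algebraic closure of F_2 with ζ₁^{m-1} = ζ₂^{m-1} = ((1+ζ₁)/(1+ζ₂))^{m-1} = 1. -/

import Mathlib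

open Polynomial

set_option maxHeartbeats 1000000 in
/-- Characterization of pairs of critical points with equal critical values for `x^m`
in terms of `(m-1)`-th roots of unity. -/
theorem stmt10 (m : ℕ) (hm : 7 ≤ m) (hodd : Odd m)
    (α : AlgebraicClosure (ZMod 2)) (hα : α ≠ 0)
    (xi xj : AlgebraicClosure (ZMod 2)) (hne : xi ≠ xj) :
    (xi ^ (m - 1) = (xi + α) ^ (m - 1) ∧ xj ^ (m - 1) = (xj + α) ^ (m - 1) ∧
      xi ^ m + (xi + α) ^ m = xj ^ m + (xj + α) ^ m) ↔
    ∃ ζ₁ ζ₂ : AlgebraicClosure (ZMod 2), ζ₁ ≠ ζ₂ ∧ ζ₁ ≠ 1 ∧ ζ₂ ≠ 1 ∧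
      ζ₁ ^ (m - 1) = 1 ∧ ζ₂ ^ (m - 1) = 1 ∧ ((1 + ζ₁) / (1 + ζ₂)) ^ (m - 1) = 1 ∧
      xi = ζ₁ * (1 + ζ₂) / (ζ₁ + ζ₂) * α ∧ xj = (1 + ζ₂) / (ζ₁ + ζ₂) * α := by
  haveI : CharP (AlgebraicClosure (ZMod 2)) 2 :=
    charP_of_injective_algebraMap (algebraMap (ZMod 2) (AlgebraicClosure (ZMod 2))).injective 2
  have two : (2 : AlgebraicClosure (ZMod 2)) = 0 := by
    have := CharP.cast_eq_zero (AlgebraicClosure (ZMod 2)) 2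
    exact_mod_cast this
  obtain ⟨k, rfl⟩ : ∃ k, m = k + 1 := ⟨m - 1, by omega⟩
  have hk : k ≠ 0 := by omega
  simp only [Nat.add_sub_cancel]
  have ecrit : ∀ x : AlgebraicClosure (ZMod 2),
      x ^ k = (x + α) ^ k → x ^ (k + 1) + (x + α) ^ (k + 1) = x ^ k * α := by
    intro x h
    rw [pow_succ, pow_succ, ← h]
    linear_combination x ^ k * x * two
  constructor
  · rintro ⟨h1, h2, h3⟩
    have hxj0 : xj ≠ 0 := by
      intro h
      rw [h, zero_pow hk, zero_add] at h2
      exact hα (pow_eq_zero_iff hk |>.mp h2.symm)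
    have hxja : xj + α ≠ 0 := by
      intro h
      rw [h, zero_pow hk] at h2
      exact hxj0 (pow_eq_zero_iff hk |>.mp h2)
    have hxi0 : xi ≠ 0 := by
      intro h
      rw [h, zero_pow hk, zero_add] at h1
      exact hα (pow_eq_zero_iff hk |>.mp h1.symm)
    have hxiα : xi + α ≠ 0 := by
      intro h
      rw [h, zero_pow hk] at h1
      exact hxi0 (pow_eq_zero_iff hk |>.mp h1)
    have hsum : xi + xj ≠ 0 := by
      intro h
      exact hne (by linear_combination h - xj * two)
    have key : xi ^ k = xj ^ k := by
      have e1 := ecrit xi h1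
      have e2 := ecrit xj h2
      have : xi ^ k * α = xj ^ k * α := by rw [← e1, ← e2, h3]
      exact mul_right_cancel₀ hα this
    have c1 : xi / xj ≠ (xi + α) / (xj + α) := by
      intro h
      rw [div_eq_div_iff hxj0 hxja] at h
      exact hne (mul_right_cancel₀ hα (by linear_combination h))
    have c2 : xi / xj ≠ 1 := by
      intro h
      exact hne ((div_eq_one_iff_eq hxj0).mp h)
    have c3 : (xi + α) / (xj + α) ≠ 1 := by
      intro h
      have := (div_eq_one_iff_eq hxja).mp h
      exact hne (by linear_combination this)
    have c4 : (xi / xj) ^ k = 1 := by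
      rw [div_pow, key, div_self (pow_ne_zero k hxj0)]
    have c5 : ((xi + α) / (xj + α)) ^ k = 1 := by
      rw [div_pow, ← h1, key, h2, div_self (pow_ne_zero k hxja)]
    have hb1 : 1 + xi / xj = (xi + xj) / xj := by
      field_simp
      ring
    have hb2 : 1 + (xi + α) / (xj + α) = (xi + xj) / (xj + α) := by
      field_simp
      linear_combination α * two
    have c6 : ((1 + xi / xj) / (1 + (xi + α) / (xj + α))) ^ k = 1 := by
      have hbase : (1 + xi / xj) / (1 + (xi + α) / (xj + α)) = (xj + α) / xj := by
        rw [hb1, hb2]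
        field_simp
      rw [hbase, div_pow, ← h2, div_self (pow_ne_zero k hxj0)]
    have hd : xi / xj + (xi + α) / (xj + α) = α * (xi + xj) / (xj * (xj + α)) := by
      field_simp
      linear_combination xi * xj * two
    have hdne : xi / xj + (xi + α) / (xj + α) ≠ 0 := by
      rw [hd]
      exact div_ne_zero (mul_ne_zero hα hsum) (mul_ne_zero hxj0 hxja)
    have c8 : xj = (1 + (xi + α) / (xj + α)) / (xi / xj + (xi + α) / (xj + α)) * α := by
      rw [hb2, hd, div_div_div_comm]
      field_simp
    refine ⟨xi / xj, (xi + α) / (xj + α), c1, c2, c3, c4, c5, c6, ?_, c8⟩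
    rw [hb2, hd]
    field_simp
  · rintro ⟨ζ₁, ζ₂, hζne, hζ1ne, hζ2ne, e1, e2, e3, hxi, hxj⟩
    subst hxi hxj
    have hd : ζ₁ + ζ₂ ≠ 0 := fun h => hζne (by linear_combination h - ζ₂ * two)
    have ha1 : 1 + ζ₁ ≠ 0 := fun h => hζ1ne (by linear_combination h - two)
    have ha2 : 1 + ζ₂ ≠ 0 := fun h => hζ2ne (by linear_combination h - two)
    have hz1 : ζ₁ ≠ 0 := by
      intro h
      rw [h, zero_pow hk] at e1
      exact zero_ne_one e1
    have e3' : (1 + ζ₁) ^ k = (1 + ζ₂) ^ k := by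
      rw [div_pow] at e3
      exact (div_eq_one_iff_eq (pow_ne_zero k ha2)).mp e3
    have hxia : ζ₁ * (1 + ζ₂) / (ζ₁ + ζ₂) * α + α = ζ₂ * (1 + ζ₁) / (ζ₁ + ζ₂) * α := by
      field_simp
      linear_combination ζ₁ * two
    have hxja : (1 + ζ₂) / (ζ₁ + ζ₂) * α + α = (1 + ζ₁) / (ζ₁ + ζ₂) * α := by
      field_simp
      linear_combination ζ₂ * two
    have g1 : (ζ₁ * (1 + ζ₂) / (ζ₁ + ζ₂) * α) ^ k = (ζ₁ * (1 + ζ₂) / (ζ₁ + ζ₂) * α + α) ^ k := by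
      rw [hxia, mul_pow, mul_pow, div_pow, div_pow, mul_pow, mul_pow, e1, e2, e3']
    have g2 : ((1 + ζ₂) / (ζ₁ + ζ₂) * α) ^ k = ((1 + ζ₂) / (ζ₁ + ζ₂) * α + α) ^ k := by
      rw [hxja, mul_pow, mul_pow, div_pow, div_pow, e3']
    refine ⟨g1, g2, ?_⟩
    rw [ecrit _ g1, ecrit _ g2]
    have hmul : ζ₁ * (1 + ζ₂) / (ζ₁ + ζ₂) * α = ζ₁ * ((1 + ζ₂) / (ζ₁ + ζ₂) * α) := by ring
    rw [hmul, mul_pow, e1, one_mul]
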